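/- Let L be a linear order and let T(L) be the tree of finite strictly decreasing sequences of elements of L (a prefix-closed set of finite lists containing the empty list). Then: (1) T(L) has an infinite path if and only if L has an infinite strictly decreasing sequence (so L is well-founded iff T(L) is well-founded); and (2) if L is well-founded, then the rank of T(L) equals the order type of L (the ordinal Ordinal.type of the strict order on L). -/

import Mathlib

/-- The relation "τ properly extends σ" on a tree `T` of finite lists:
`extRel T τ σ` holds iff `σ` is a proper prefix of `τ`. -/
def extRel {α : Type*} (T : Set (List α)) : T → T → Prop :=
  fun τ σ => σ.val <+: τ.val ∧ σ.val ≠ τ.val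

/-- The rank of a node of a well-founded tree with respect to the proper-extension
relation: `rank σ = sup { rank τ + 1 : τ a one-step extension of σ in T }`. -/
noncomputable def treeRank {α : Type*} (T : Set (List α))
    (hwf : WellFounded (extRel T)) (σ : T) : Ordinal :=
  @IsWellFounded.rank _ (extRel T) ⟨hwf⟩ σ

/-- `T(L)`: the tree of finite strictly decreasing sequences of elements of `L`. -/
def descTree (L : Type*) [LinearOrder L] : Set (List L) :=
  {σ | σ.Chain' (· > ·)}

section Aux
variable {L : Type*} [LinearOrder L]

lemma descTree_pairwise {σ : List L} (h : σ ∈ descTree L) : σ.Pairwise (· > ·) :=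
  List.isChain_iff_pairwise.mp h

lemma ext_ne_nil {σ τ : List L} (hp : σ <+: τ) (hne : σ ≠ τ) : τ ≠ [] := by
  rintro rfl
  exact hne (List.prefix_nil.mp hp)

lemma last_lt_last {σ τ : List L} (hτ : τ ∈ descTree L) (hp : σ <+: τ) (hne : σ ≠ τ)
    (hσ : σ ≠ []) (hτn : τ ≠ []) : τ.getLast hτn < σ.getLast hσ := by
  obtain ⟨ρ, rfl⟩ := hp
  have hρ : ρ ≠ [] := by rintro rfl; simp at hne
  have hpw := List.pairwise_append.mp (descTree_pairwise hτ)
  have := hpw.2.2 (σ.getLast hσ) (List.getLast_mem hσ) (ρ.getLast hρ) (List.getLast_mem hρ)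
  rwa [List.getLast_append_of_right_ne_nil σ ρ hρ]

lemma snoc_mem {σ : List L} (hσ : σ ∈ descTree L) (b : L)
    (hb : ∀ h : σ ≠ [], b < σ.getLast h) : σ ++ [b] ∈ descTree L := by
  rcases eq_or_ne σ [] with rfl | hne
  · simp [descTree]; exact List.isChain_singleton _
  · refine List.isChain_iff_pairwise.mpr (List.pairwise_append.mpr
      ⟨descTree_pairwise hσ, by simp, ?_⟩)
    intro x hx y hy
    simp only [List.mem_singleton] at hy
    subst hy
    conv at hx => rw [← List.dropLast_append_getLast hne]
    rcases List.mem_append.mp hx with hx | hx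
    · have hpw := List.pairwise_append.mp
        (by rw [List.dropLast_append_getLast hne]; exact descTree_pairwise hσ)
      exact lt_trans (hb hne) (hpw.2.2 x hx _ (by simp))
    · simp only [List.mem_singleton] at hx
      subst hx; exact hb hne

lemma snoc_ext {σ : List L} (b : L) : σ <+: σ ++ [b] ∧ σ ≠ σ ++ [b] :=
  ⟨List.prefix_append _ _, by simp⟩

lemma acc_of_wf (hwf : WellFounded ((· < ·) : L → L → Prop)) :
    ∀ a : L, ∀ σ : descTree L, ∀ h : σ.val ≠ [], σ.val.getLast h = a →
      Acc (extRel (descTree L)) σ := by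
  intro a
  induction a using hwf.induction with
  | _ a IH =>
    rintro σ h rfl
    constructor
    rintro τ ⟨hp, hne⟩
    have hτn : τ.val ≠ [] := ext_ne_nil hp hne
    exact IH _ (last_lt_last τ.2 hp hne h hτn) τ hτn rfl

lemma wf_ext_of_wf (hwf : WellFounded ((· < ·) : L → L → Prop)) :
    WellFounded (extRel (descTree L)) := by
  constructor
  intro σ
  rcases eq_or_ne σ.val [] with h | h
  · constructor
    rintro τ ⟨hp, hne⟩
    rw [h] at hne
    exact acc_of_wf hwf _ τ (ext_ne_nil (h ▸ hp) hne) rfl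
  · exact acc_of_wf hwf _ σ h rfl

lemma wf_of_wf_ext (hwf : WellFounded (extRel (descTree L))) :
    WellFounded ((· < ·) : L → L → Prop) := by
  have key : ∀ σ : descTree L, ∀ h : σ.val ≠ [], Acc (· < ·) (σ.val.getLast h) := by
    intro σ
    induction σ using hwf.induction with
    | _ σ IH =>
      intro h
      constructor
      intro b hb
      have hmem : σ.val ++ [b] ∈ descTree L := snoc_mem σ.2 b (fun _ => hb)
      have := IH ⟨σ.val ++ [b], hmem⟩ (snoc_ext b)
      simpa using this (by simp)
  constructor
  intro a
  have h1 : [a] ∈ descTree L := by simp [descTree]; exact List.isChain_singleton _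
  simpa using key ⟨[a], h1⟩ (by simp)

end Aux


lemma rank_last {L : Type*} [LinearOrder L] [IsWellOrder L (· < ·)]
    (hwf : WellFounded (extRel (descTree L))) :
    ∀ σ : descTree L, ∀ h : σ.val ≠ [],
      treeRank (descTree L) hwf σ = Ordinal.typein (· < ·) (σ.val.getLast h) := by
  have ha := IsWellFounded.rank_eq_typein ((· < ·) : L → L → Prop)
  intro σ
  induction σ using hwf.induction with
  | _ σ IH =>
    intro h
    rw [← congrFun ha]
    unfold treeRank
    rw [@IsWellFounded.rank_eq _ _ ⟨hwf⟩, IsWellFounded.rank_eq]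
    apply le_antisymm
    · rw [Ordinal.iSup_le_iff]
      rintro ⟨τ, hτ⟩
      have hτn := ext_ne_nil hτ.1 hτ.2
      have hlt : τ.val.getLast hτn < σ.val.getLast h := last_lt_last τ.2 hτ.1 hτ.2 h hτn
      have h1 : @IsWellFounded.rank _ _ ⟨hwf⟩ τ =
          IsWellFounded.rank ((· < ·) : L → L → Prop) (τ.val.getLast hτn) := by
        rw [congrFun ha]; exact IH τ hτ hτn
      rw [h1]
      exact Ordinal.le_iSup (fun b : {b // b < σ.val.getLast h} =>
        Order.succ (IsWellFounded.rank ((· < ·) : L → L → Prop) b.val)) ⟨_, hlt⟩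
    · rw [Ordinal.iSup_le_iff]
      rintro ⟨b, hb⟩
      have hmem : σ.val ++ [b] ∈ descTree L := snoc_mem σ.2 b (fun _ => hb)
      have hext : extRel (descTree L) ⟨σ.val ++ [b], hmem⟩ σ := snoc_ext b
      have h1 : @IsWellFounded.rank _ _ ⟨hwf⟩ (⟨σ.val ++ [b], hmem⟩ : descTree L) =
          IsWellFounded.rank ((· < ·) : L → L → Prop) b := by
        rw [congrFun ha]
        have := IH ⟨σ.val ++ [b], hmem⟩ hext (by simp)
        simpa [List.getLast_append_singleton, treeRank] using this
      rw [← h1]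
      exact Ordinal.le_iSup (fun τ : {τ // extRel (descTree L) τ σ} =>
        Order.succ (@IsWellFounded.rank _ _ ⟨hwf⟩ τ.val)) ⟨_, hext⟩

/-- (1) `T(L)` has an infinite path iff `L` has an infinite strictly decreasing sequence;
equivalently, `L` is well-founded iff `T(L)` is well-founded; and
(2) if `L` is well-founded, the rank of `T(L)` equals the order type of `L`. -/
theorem statement4 (L : Type*) [LinearOrder L] :
    ((∃ f : ℕ → L, ∀ k : ℕ, (List.range k).map f ∈ descTree L) ↔
      ∃ f : ℕ → L, ∀ n : ℕ, f (n + 1) < f n) ∧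
    (WellFounded ((· < ·) : L → L → Prop) ↔ WellFounded (extRel (descTree L))) ∧
    (∀ (h : IsWellOrder L (· < ·)) (hwf : WellFounded (extRel (descTree L))),
      treeRank (descTree L) hwf ⟨[], by simp [descTree]; exact List.isChain_nil⟩ =
        @Ordinal.type L (· < ·) h) := by
  refine ⟨⟨?_, ?_⟩, ⟨wf_ext_of_wf, wf_of_wf_ext⟩, ?_⟩
  · rintro ⟨f, hf⟩
    refine ⟨f, fun n => ?_⟩
    have := descTree_pairwise (hf (n + 2))
    rw [List.pairwise_map] at this
    rw [List.pairwise_iff_getElem] at this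
    have h2 := this n (n+1) (by simp) (by simp) (by omega)
    simpa using h2
  · rintro ⟨f, hf⟩
    refine ⟨f, fun k => ?_⟩
    refine List.Pairwise.isChain ?_
    rw [List.pairwise_map]
    exact (List.pairwise_lt_range (n := k)).imp (fun {m n} h =>
      strictAnti_nat_of_succ_lt hf h)
  · intro h hwf
    haveI := h
    unfold treeRank
    rw [@IsWellFounded.rank_eq _ _ ⟨hwf⟩]
    apply le_antisymm
    · rw [Ordinal.iSup_le_iff]
      rintro ⟨τ, hτ⟩
      have hτn := ext_ne_nil hτ.1 hτ.2
      have h1 : @IsWellFounded.rank _ _ ⟨hwf⟩ τ =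
          Ordinal.typein (· < ·) (τ.val.getLast hτn) := rank_last hwf τ hτn
      rw [h1]
      exact Order.succ_le_iff.mpr (Ordinal.typein_lt_type _ _)
    · apply le_of_forall_lt
      intro o ho
      obtain ⟨c, rfl⟩ := Ordinal.typein_surj (· < ·) ho
      have hmem : [c] ∈ descTree L := by simp [descTree]; exact List.isChain_singleton _
      have hext : extRel (descTree L) ⟨[c], hmem⟩ ⟨[], by simp [descTree]; exact List.isChain_nil⟩ :=
        ⟨List.nil_prefix, by simp⟩
      have h1 : @IsWellFounded.rank _ _ ⟨hwf⟩ (⟨[c], hmem⟩ : descTree L) =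
          Ordinal.typein ((· < ·) : L → L → Prop) c := by
        simpa [treeRank] using rank_last hwf ⟨[c], hmem⟩ (by simp)
      calc Ordinal.typein ((· < ·) : L → L → Prop) c
          < Order.succ (@IsWellFounded.rank _ _ ⟨hwf⟩ (⟨[c], hmem⟩ : descTree L)) := by
            rw [h1]; exact Order.lt_succ _
        _ ≤ _ := Ordinal.le_iSup (fun τ : {τ // extRel (descTree L) τ
              (⟨[], by simp [descTree]; exact List.isChain_nil⟩ : descTree L)} =>
              Order.succ (@IsWellFounded.rank _ _ ⟨hwf⟩ τ.val)) ⟨_, hext⟩
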